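/- Let n ≥ 1 and τ ≥ 0, and set σ = τ/((n−1)τ + n). Then Ω_n(σ) ⊆ Ω̃(σ), i.e. every ω ∈ ℝⁿ satisfying ‖Tω‖_ℤ ≥ C·T^{-(1+σ)/n} for all positive integers T (for some C > 0) is nonresonant and its periods satisfy T_{i+1}(ω) ≤ C'·T_i(ω)^{1+σ} for all i ∈ ℕ, for some constant C' > 0. -/

import Mathlib

open Finset

/-- Sup norm on `ℝⁿ`. -/
noncomputable def supNorm {n : ℕ} (x : Fin n → ℝ) : ℝ := ⨆ i, |x i|

/-- Sup-norm distance from `x ∈ ℝⁿ` to the lattice `ℤⁿ`. -/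
noncomputable def distZ {n : ℕ} (x : Fin n → ℝ) : ℝ :=
  sInf {r : ℝ | ∃ k : Fin n → ℤ, r = supNorm (fun i => x i - k i)}

/-- Distance from a real number to `ℤ`. -/
noncomputable def distZ1 (t : ℝ) : ℝ := sInf {r : ℝ | ∃ m : ℤ, r = |t - m|}

/-- `ω ∈ ℚⁿ`. -/
def IsRationalVec {n : ℕ} (ω : Fin n → ℝ) : Prop := ∀ i, ∃ q : ℚ, (q : ℝ) = ω i

/-- `ω` is resonant: some nonzero integer vector `k` has `⟨k, ω⟩ ∈ ℤ`. -/
def Resonant {n : ℕ} (ω : Fin n → ℝ) : Prop :=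
  ∃ k : Fin n → ℤ, k ≠ 0 ∧ ∃ m : ℤ, ∑ i, (k i : ℝ) * ω i = (m : ℝ)

/-- The sequence of periods of `ω`. -/
noncomputable def periods {n : ℕ} (ω : Fin n → ℝ) : ℕ → ℕ
  | 0 => 1
  | i + 1 => sInf {T : ℕ | 1 ≤ T ∧
      distZ (fun j => (T : ℝ) * ω j) < distZ (fun j => (periods ω i : ℝ) * ω j)}

/-- The resonance module of `ω`, as a subgroup of `ℤⁿ`. -/
def resModule {n : ℕ} (ω : Fin n → ℝ) : AddSubgroup (Fin n → ℤ) where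
  carrier := {k | ∃ m : ℤ, ∑ i, (k i : ℝ) * ω i = (m : ℝ)}
  zero_mem' := ⟨0, by simp⟩
  add_mem' := by
    rintro a b ⟨ma, ha⟩ ⟨mb, hb⟩
    refine ⟨ma + mb, ?_⟩
    push_cast
    simp only [Pi.add_apply, Int.cast_add, add_mul, Finset.sum_add_distrib, ha, hb]
  neg_mem' := by
    rintro a ⟨m, hm⟩
    refine ⟨-m, ?_⟩
    push_cast
    simp [neg_mul, Finset.sum_neg_distrib, hm]
lemma supNorm_le {n : ℕ} {x : Fin n → ℝ} {c : ℝ} (hc : 0 ≤ c) (h : ∀ i, |x i| ≤ c) :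
    supNorm x ≤ c := Real.iSup_le h hc

lemma supNorm_nonneg {n : ℕ} (x : Fin n → ℝ) : 0 ≤ supNorm x :=
  Real.iSup_nonneg fun i => abs_nonneg _

lemma distZ_le {n : ℕ} (x : Fin n → ℝ) (k : Fin n → ℤ) :
    distZ x ≤ supNorm (fun i => x i - k i) :=
  csInf_le ⟨0, by rintro r ⟨k, rfl⟩; exact supNorm_nonneg _⟩ ⟨k, rfl⟩

lemma distZ_le_one {n : ℕ} (x : Fin n → ℝ) : distZ x ≤ 1 := by
  refine le_trans (distZ_le x (fun i => ⌊x i⌋)) (supNorm_le zero_le_one fun i => ?_)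
  rw [abs_of_nonneg (Int.fract_nonneg _)]
  exact (Int.fract_lt_one _).le

lemma abs_sub_lt_one_of_floor_eq {x y : ℝ} (h : ⌊x⌋ = ⌊y⌋) : |x - y| < 1 := by
  have hx := Int.fract_nonneg x
  have hx' := Int.fract_lt_one x
  have hy := Int.fract_nonneg y
  have hy' := Int.fract_lt_one y
  have hc : ((⌊x⌋ : ℝ)) = (⌊y⌋ : ℝ) := by exact_mod_cast h
  unfold Int.fract at *
  rw [abs_lt]; constructor <;> nlinarith

lemma dirichlet_step {n : ℕ} (ω : Fin n → ℝ) (S : Finset (Fin n)) (Q : ℕ) (hQ : 1 ≤ Q) :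
    ∃ T : ℕ, 1 ≤ T ∧ T ≤ Q ^ S.card ∧ ∀ j ∈ S, ∃ c : ℤ, |(T : ℝ) * ω j - c| < 1 / Q := by
  have hQ0 : (0:ℝ) < Q := by exact_mod_cast hQ
  have hbox : ∀ (t : ℕ) (j : Fin n), (⌊(Q:ℝ) * Int.fract ((t:ℝ) * ω j)⌋).toNat < Q := by
    intro t j
    have h1 : (Q:ℝ) * Int.fract ((t:ℝ) * ω j) < Q := by
      nlinarith [Int.fract_lt_one ((t:ℝ) * ω j), Int.fract_nonneg ((t:ℝ) * ω j)]
    have : ⌊(Q:ℝ) * Int.fract ((t:ℝ) * ω j)⌋ < (Q:ℤ) := Int.floor_lt.mpr (by exact_mod_cast h1)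
    omega
  set f : Fin (Q ^ S.card + 1) → (S → Fin Q) :=
    fun t j => ⟨(⌊(Q:ℝ) * Int.fract ((t:ℝ) * ω j.1)⌋).toNat, hbox t j.1⟩ with hf
  have hcard : Fintype.card (S → Fin Q) < Fintype.card (Fin (Q ^ S.card + 1)) := by
    simp [Fintype.card_fun]
  obtain ⟨t₁, t₂, hne, heq⟩ := Fintype.exists_ne_map_eq_of_card_lt f hcard
  wlog hlt : (t₁ : ℕ) < (t₂ : ℕ) generalizing t₁ t₂
  · exact this t₂ t₁ hne.symm heq.symm (by have := Fin.val_ne_of_ne hne; omega)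
  refine ⟨(t₂ : ℕ) - (t₁ : ℕ), by omega, by have := t₂.isLt; omega, fun j hj => ?_⟩
  have hfj : (⌊(Q:ℝ) * Int.fract (((t₁:ℕ):ℝ) * ω j)⌋) = (⌊(Q:ℝ) * Int.fract (((t₂:ℕ):ℝ) * ω j)⌋) := by
    have h1 := congrFun heq ⟨j, hj⟩
    have h2 : (⌊(Q:ℝ) * Int.fract (((t₁:ℕ):ℝ) * ω j)⌋).toNat
        = (⌊(Q:ℝ) * Int.fract (((t₂:ℕ):ℝ) * ω j)⌋).toNat := congrArg Fin.val h1
    have hp1 : 0 ≤ ⌊(Q:ℝ) * Int.fract (((t₁:ℕ):ℝ) * ω j)⌋ :=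
      Int.floor_nonneg.mpr (mul_nonneg hQ0.le (Int.fract_nonneg _))
    have hp2 : 0 ≤ ⌊(Q:ℝ) * Int.fract (((t₂:ℕ):ℝ) * ω j)⌋ :=
      Int.floor_nonneg.mpr (mul_nonneg hQ0.le (Int.fract_nonneg _))
    omega
  refine ⟨⌊((t₂:ℕ):ℝ) * ω j⌋ - ⌊((t₁:ℕ):ℝ) * ω j⌋, ?_⟩
  have habs : |(Q:ℝ) * Int.fract (((t₂:ℕ):ℝ) * ω j) - (Q:ℝ) * Int.fract (((t₁:ℕ):ℝ) * ω j)| < 1 :=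
    abs_sub_lt_one_of_floor_eq hfj.symm
  have hexp : ((((t₂:ℕ) - (t₁:ℕ) : ℕ)):ℝ) * ω j - ((⌊((t₂:ℕ):ℝ) * ω j⌋ - ⌊((t₁:ℕ):ℝ) * ω j⌋ : ℤ):ℝ)
      = Int.fract (((t₂:ℕ):ℝ) * ω j) - Int.fract (((t₁:ℕ):ℝ) * ω j) := by
    have : ((((t₂:ℕ) - (t₁:ℕ) : ℕ)):ℝ) = ((t₂:ℕ):ℝ) - ((t₁:ℕ):ℝ) := by
      push_cast [Nat.cast_sub hlt.le]; ring
    rw [this]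
    unfold Int.fract
    push_cast
    ring
  rw [hexp]
  rw [abs_lt] at habs ⊢
  have hc : (Q:ℝ) * (1 / Q) = 1 := mul_one_div_cancel (ne_of_gt hQ0)
  constructor
  · nlinarith [habs.1]
  · nlinarith [habs.2]

/-- with `σ = τ/((n-1)τ+n)`, `Ω_n(σ) ⊆ Ω̃(σ)`. -/
theorem stmt3 {n : ℕ} (hn : 1 ≤ n) (τ : ℝ) (hτ : 0 ≤ τ) (ω : Fin n → ℝ)
    (hΩ : ∃ C > (0 : ℝ), ∀ T : ℕ, 1 ≤ T →
      distZ (fun j => (T : ℝ) * ω j) ≥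
        C * (T : ℝ) ^ (-(1 + τ / (((n : ℝ) - 1) * τ + (n : ℝ))) / (n : ℝ))) :
    ¬ Resonant ω ∧ ¬ IsRationalVec ω ∧
      ∃ C' > (0 : ℝ), ∀ i : ℕ,
        (periods ω (i + 1) : ℝ) ≤
          C' * (periods ω i : ℝ) ^ (1 + τ / (((n : ℝ) - 1) * τ + (n : ℝ))) := by
  obtain ⟨C, hC, hbound⟩ := hΩ
  have hn1 : (1:ℝ) ≤ (n:ℝ) := by exact_mod_cast hn
  have hn0 : (0:ℝ) < (n:ℝ) := by linarith
  set D : ℝ := ((n:ℝ) - 1) * τ + (n:ℝ) with hDdef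
  have hD1 : (1:ℝ) ≤ D := by rw [hDdef]; nlinarith
  have hD0 : (0:ℝ) < D := by linarith
  set E : ℝ := (1 + τ / D) / (n:ℝ) with hEdef
  have hEeq : E = (τ + 1) / D := by
    rw [hEdef, div_eq_div_iff hn0.ne' hD0.ne', add_mul, one_mul, div_mul_cancel₀ _ hD0.ne', hDdef]
    ring
  have hE0 : 0 < E := by rw [hEeq]; positivity
  have hEn : E * (n:ℝ) = 1 + τ / D := div_mul_cancel₀ _ (ne_of_gt hn0)
  have hexpneg : -(1 + τ / D) / (n:ℝ) = -E := by rw [hEdef]; ring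
  have hbound' : ∀ T : ℕ, 1 ≤ T → C * (T:ℝ) ^ (-E) ≤ distZ (fun j => (T:ℝ) * ω j) := by
    intro T hT
    have := hbound T hT
    rw [hexpneg] at this
    exact this
  -- the nonresonance part
  have hres : ¬ Resonant ω := by
    rintro ⟨k, hk0, m, hm⟩
    obtain ⟨i₀, hi₀⟩ : ∃ i, k i ≠ 0 := by
      by_contra h; push_neg at h; exact hk0 (funext h)
    set K : ℕ := ∑ i, (k i).natAbs with hK
    have hKi : (k i₀).natAbs ≤ K := Finset.single_le_sum
      (f := fun i => (k i).natAbs) (fun _ _ => Nat.zero_le _) (mem_univ i₀)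
    have ha1 : 1 ≤ (k i₀).natAbs := Int.natAbs_pos.mpr hi₀
    have hK1 : 1 ≤ K := le_trans ha1 hKi
    have hK0 : (0:ℝ) < K := by exact_mod_cast hK1
    have happrox : ∀ Q : ℕ, 1 ≤ Q → ∃ T : ℕ, 1 ≤ T ∧ T ≤ K * Q ^ (n - 1) ∧
        distZ (fun j => (T : ℝ) * ω j) ≤ (K : ℝ) / Q := by
      intro Q hQ
      have hQ0 : (0 : ℝ) < Q := by exact_mod_cast hQ
      obtain ⟨T, hT1, hTQ, hT3⟩ := dirichlet_step ω (univ.erase i₀) Q hQ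
      have hcard : (univ.erase i₀).card = n - 1 := by
        rw [card_erase_of_mem (mem_univ _), card_univ, Fintype.card_fin]
      rw [hcard] at hTQ
      have hch : ∀ j : Fin n, ∃ c : ℤ, j ≠ i₀ → |(T : ℝ) * ω j - c| < 1 / Q := by
        intro j
        by_cases h : j = i₀
        · exact ⟨0, fun hj => absurd h hj⟩
        · obtain ⟨c, hc⟩ := hT3 j (mem_erase.mpr ⟨h, mem_univ j⟩); exact ⟨c, fun _ => hc⟩
      choose c hc using hch
      set a : ℕ := (k i₀).natAbs with haa
      set s : ℤ := if 0 ≤ k i₀ then 1 else -1 with hs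
      have has : (a : ℤ) = s * k i₀ := by simp only [hs, haa]; split <;> omega
      have hsabs : |(s : ℝ)| = 1 := by simp only [hs]; split <;> simp
      set cv : Fin n → ℤ := fun j =>
        if j = i₀ then s * ((T : ℤ) * m - ∑ j' ∈ univ.erase i₀, k j' * c j')
        else (a : ℤ) * c j with hcv
      refine ⟨a * T, Nat.one_le_iff_ne_zero.mpr (Nat.mul_ne_zero (by omega) (by omega)),
        Nat.mul_le_mul hKi hTQ, ?_⟩
      refine le_trans (distZ_le _ cv) (supNorm_le (by positivity) fun j => ?_)
      have hsum : (k i₀ : ℝ) * ((T : ℝ) * ω i₀)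
          = (T : ℝ) * (m : ℝ) - ∑ j ∈ univ.erase i₀, (k j : ℝ) * ((T : ℝ) * ω j) := by
        have h0 : ∑ j, (k j : ℝ) * ((T : ℝ) * ω j) = (T : ℝ) * (m : ℝ) := by
          rw [← hm, Finset.mul_sum]
          exact Finset.sum_congr rfl (by intros; ring)
        have h1 : (k i₀ : ℝ) * ((T : ℝ) * ω i₀)
            + ∑ j ∈ univ.erase i₀, (k j : ℝ) * ((T : ℝ) * ω j)
            = ∑ j, (k j : ℝ) * ((T : ℝ) * ω j) :=
          Finset.add_sum_erase univ (fun j => (k j : ℝ) * ((T : ℝ) * ω j)) (mem_univ i₀)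
        linarith
      have hEK : ∑ j ∈ univ.erase i₀, |(k j : ℝ)| ≤ (K : ℝ) := by
        have h1 : ∑ j ∈ univ.erase i₀, ((k j).natAbs : ℕ) ≤ K :=
          Finset.sum_le_sum_of_subset (Finset.subset_univ _)
        calc ∑ j ∈ univ.erase i₀, |(k j : ℝ)|
            = ((∑ j ∈ univ.erase i₀, (k j).natAbs : ℕ) : ℝ) := by
              push_cast [Nat.cast_natAbs, Int.cast_abs]; rfl
          _ ≤ (K : ℝ) := by exact_mod_cast h1
      by_cases h : j = i₀
      · subst h
        have hasR : ((a : ℕ) : ℝ) = (s : ℝ) * ((k j : ℤ) : ℝ) := by exact_mod_cast has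
        have hsplit : ∑ j' ∈ univ.erase j, (k j' : ℝ) * ((T : ℝ) * ω j' - (c j' : ℝ))
            = (∑ j' ∈ univ.erase j, (k j' : ℝ) * ((T : ℝ) * ω j'))
              - ∑ j' ∈ univ.erase j, (k j' : ℝ) * (c j' : ℝ) := by
          rw [← Finset.sum_sub_distrib]
          exact Finset.sum_congr rfl (by intros; ring)
        have hval : ((a * T : ℕ) : ℝ) * ω j - (cv j : ℝ)
            = -(s : ℝ) * ∑ j' ∈ univ.erase j, (k j' : ℝ) * ((T : ℝ) * ω j' - (c j' : ℝ)) := by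
          simp only [hcv, if_pos rfl]
          push_cast
          rw [hsplit]
          linear_combination ((T : ℝ) * ω j) * hasR + (s : ℝ) * hsum
        rw [hval, abs_mul, abs_neg, hsabs, one_mul]
        refine le_trans (Finset.abs_sum_le_sum_abs _ _) ?_
        have hterm : ∀ j' ∈ univ.erase j, |(k j' : ℝ) * ((T : ℝ) * ω j' - (c j' : ℝ))|
            ≤ |(k j' : ℝ)| * (1 / Q) := by
          intro j' hj'
          rw [abs_mul]
          exact mul_le_mul_of_nonneg_left (hc j' (Finset.ne_of_mem_erase hj')).le (abs_nonneg _)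
        refine le_trans (Finset.sum_le_sum hterm) ?_
        rw [← Finset.sum_mul]
        rw [div_eq_mul_one_div (K : ℝ) (Q : ℝ)]
        exact mul_le_mul_of_nonneg_right hEK (by positivity)
      · have hj' : j ∈ univ.erase i₀ := mem_erase.mpr ⟨h, mem_univ j⟩
        have hval : ((a * T : ℕ) : ℝ) * ω j - (cv j : ℝ)
            = (a : ℝ) * ((T : ℝ) * ω j - (c j : ℝ)) := by
          simp only [hcv, if_neg h]; push_cast; ring
        rw [hval, abs_mul, abs_of_nonneg (by positivity : (0:ℝ) ≤ (a:ℝ))]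
        have h1 : (a : ℝ) * |(T : ℝ) * ω j - (c j : ℝ)| ≤ (a : ℝ) * (1 / Q) :=
          mul_le_mul_of_nonneg_left (hc j h).le (by positivity)
        have h2 : (a : ℝ) ≤ (K : ℝ) := by exact_mod_cast hKi
        calc (a : ℝ) * |(T : ℝ) * ω j - (c j : ℝ)| ≤ (a : ℝ) * (1 / Q) := h1
          _ ≤ (K : ℝ) * (1 / Q) := mul_le_mul_of_nonneg_right h2 (by positivity)
          _ = (K : ℝ) / Q := by ring
    -- exponent bookkeeping
    have hβ : 1 - ((n:ℝ) - 1) * E = 1 / D := by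
      rw [hEeq, eq_div_iff hD0.ne', sub_mul, one_mul, mul_assoc, div_mul_cancel₀ _ hD0.ne', hDdef]
      ring
    -- the key inequality, for every Q
    have key : ∀ Q : ℕ, 1 ≤ Q → C * (Q:ℝ) ^ ((1:ℝ)/D) ≤ (K:ℝ) ^ (1 + E) := by
      intro Q hQ
      obtain ⟨T, hT1, hTle, hTd⟩ := happrox Q hQ
      have hq0 : (0:ℝ) < Q := by exact_mod_cast hQ
      have hT0 : (0:ℝ) < T := by exact_mod_cast hT1
      have h1 : C * (T:ℝ) ^ (-E) ≤ (K:ℝ) / Q := le_trans (hbound' T hT1) hTd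
      have hTle' : (T:ℝ) ≤ (K:ℝ) * (Q:ℝ) ^ ((n - 1 : ℕ)) := by exact_mod_cast hTle
      have h2 : ((K:ℝ) * (Q:ℝ) ^ ((n-1:ℕ))) ^ (-E) ≤ (T:ℝ) ^ (-E) :=
        Real.rpow_le_rpow_of_nonpos hT0 hTle' (by linarith)
      have h3 : C * ((K:ℝ) * (Q:ℝ) ^ ((n-1:ℕ))) ^ (-E) ≤ (K:ℝ) / Q :=
        le_trans (mul_le_mul_of_nonneg_left h2 hC.le) h1
      have hcast : ((n - 1 : ℕ) : ℝ) = (n:ℝ) - 1 := by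
        push_cast [Nat.cast_sub hn]; ring
      have hqpow : (Q:ℝ) ^ ((n-1:ℕ)) = (Q:ℝ) ^ (((n:ℝ) - 1)) := by
        rw [← Real.rpow_natCast (Q:ℝ) (n-1), hcast]
      rw [hqpow] at h3
      set u : ℝ := (Q:ℝ) ^ (((n:ℝ) - 1) * E) with hu
      set v : ℝ := (K:ℝ) ^ E with hv
      have hu0 : 0 < u := Real.rpow_pos_of_pos hq0 _
      have hv0 : 0 < v := Real.rpow_pos_of_pos hK0 _
      have hw : ((K:ℝ) * (Q:ℝ) ^ (((n:ℝ) - 1))) ^ E = v * u := by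
        rw [Real.mul_rpow hK0.le (Real.rpow_nonneg hq0.le _), ← Real.rpow_mul hq0.le, hv, hu]
      have hexpand : ((K:ℝ) * (Q:ℝ) ^ (((n:ℝ) - 1))) ^ (-E) = (v * u)⁻¹ := by
        rw [Real.rpow_neg (by positivity), hw]
      rw [hexpand] at h3
      have h3' : C / (v * u) ≤ (K:ℝ) / Q := by
        rw [div_eq_mul_inv]
        exact h3
      have h4 : C * (Q:ℝ) ≤ (K:ℝ) * (v * u) :=
        (div_le_div_iff₀ (by positivity) hq0).mp h3'
      have hsplitQ : (Q:ℝ) ^ ((1:ℝ)/D) = (Q:ℝ) / u := by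
        rw [← hβ, Real.rpow_sub hq0, Real.rpow_one]
      have hKsplit : (K:ℝ) ^ (1 + E) = (K:ℝ) * v := by
        rw [Real.rpow_add hK0, Real.rpow_one]
      rw [hsplitQ, hKsplit]
      have hre : C * ((Q:ℝ)/u) = C * (Q:ℝ) / u := by ring
      rw [hre, div_le_iff₀ hu0]
      calc C * (Q:ℝ) ≤ (K:ℝ) * (v * u) := h4
        _ = (K:ℝ) * v * u := by ring
    -- contradiction: choose Q large
    set M : ℝ := (K:ℝ) ^ (1 + E) / C + 1 with hM
    have hM0 : 0 < M := by positivity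
    set Q : ℕ := ⌈M ^ D⌉₊ + 1 with hQdef
    have hQ1 : 1 ≤ Q := Nat.le_add_left 1 _
    have hQge : M ^ D ≤ (Q:ℝ) := by
      rw [hQdef]; push_cast
      calc M ^ D ≤ (⌈M ^ D⌉₊ : ℝ) := Nat.le_ceil _
        _ ≤ (⌈M ^ D⌉₊ : ℝ) + 1 := by linarith
    have hMD0 : (0:ℝ) ≤ M ^ D := Real.rpow_nonneg hM0.le _
    have hQD : M ≤ (Q:ℝ) ^ ((1:ℝ)/D) := by
      calc M = (M ^ D) ^ ((1:ℝ)/D) := by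
            rw [← Real.rpow_mul hM0.le, mul_one_div_cancel (ne_of_gt hD0), Real.rpow_one]
        _ ≤ (Q:ℝ) ^ ((1:ℝ)/D) := Real.rpow_le_rpow hMD0 hQge (by positivity)
    have hfinal := key Q hQ1
    have : C * M ≤ C * (Q:ℝ) ^ ((1:ℝ)/D) := mul_le_mul_of_nonneg_left hQD hC.le
    have hCM : C * M = (K:ℝ) ^ (1 + E) + C := by
      rw [hM]; field_simp
    have h6 : C * M ≤ (K:ℝ) ^ (1 + E) := le_trans this hfinal
    rw [hCM] at h6
    linarith
  -- rationality implies resonance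
  have hirr : ¬ IsRationalVec ω := by
    intro h
    apply hres
    have i₀ : Fin n := ⟨0, hn⟩
    obtain ⟨q, hq⟩ := h i₀
    refine ⟨fun j => if j = i₀ then (q.den : ℤ) else 0, ?_, q.num, ?_⟩
    · intro hzero
      have := congrFun hzero i₀
      simp only [if_pos rfl, Pi.zero_apply] at this
      exact (Nat.cast_ne_zero.mpr q.den_nz) this
    · rw [Finset.sum_eq_single i₀ (by intro b _ hb; simp [hb]) (by simp)]
      simp only [if_pos rfl]
      rw [← hq]
      have hd : ((q.den : ℚ)) * q = q.num := by
        rw [mul_comm]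
        exact_mod_cast Rat.mul_den_eq_num q
      exact_mod_cast congrArg (fun x : ℚ => (x : ℝ)) hd
  -- the periods bound
  have hdir : ∀ Q : ℕ, 1 ≤ Q → ∃ T : ℕ, 1 ≤ T ∧ T ≤ Q ^ n ∧
      distZ (fun j => (T:ℝ) * ω j) ≤ 1 / Q := by
    intro Q hQ
    obtain ⟨T, hT1, hT2, hT3⟩ := dirichlet_step ω Finset.univ Q hQ
    choose c hc using fun j => hT3 j (mem_univ j)
    refine ⟨T, hT1, by simpa using hT2, ?_⟩
    exact le_trans (distZ_le _ c) (supNorm_le (by positivity) fun j => (hc j).le)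
  have hboth : ∀ i : ℕ, 1 ≤ periods ω i →
      1 ≤ periods ω (i+1) ∧
      (periods ω (i+1) : ℝ) ≤ (2/C) ^ n * (periods ω i : ℝ) ^ (1 + τ / D) := by
    intro i hi
    set Tp : ℕ := periods ω i with hTp
    have hTp0 : (0:ℝ) < (Tp:ℝ) := by exact_mod_cast hi
    set ε : ℝ := distZ (fun j => (Tp:ℝ) * ω j) with hε
    have hεlb : C * (Tp:ℝ) ^ (-E) ≤ ε := hbound' Tp hi
    have hε0 : 0 < ε := lt_of_lt_of_le (by positivity) hεlb
    have hε1 : ε ≤ 1 := distZ_le_one _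
    set Q : ℕ := ⌊ε⁻¹⌋₊ + 1 with hQdef
    have hQ1 : 1 ≤ Q := Nat.le_add_left 1 _
    have hQ0 : (0:ℝ) < Q := by exact_mod_cast hQ1
    have hQgt : ε⁻¹ < (Q:ℝ) := by
      rw [hQdef]; push_cast; exact Nat.lt_floor_add_one _
    have hQε : 1/(Q:ℝ) < ε := by
      rw [div_lt_iff₀ hQ0]
      have h1 : ε * ε⁻¹ = 1 := mul_inv_cancel₀ (ne_of_gt hε0)
      nlinarith
    obtain ⟨T, hT1, hTQ, hTd⟩ := hdir Q hQ1
    have hmem : T ∈ {T : ℕ | 1 ≤ T ∧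
        distZ (fun j => (T : ℝ) * ω j) < distZ (fun j => (Tp : ℝ) * ω j)} :=
      ⟨hT1, lt_of_le_of_lt hTd hQε⟩
    have hset : {T : ℕ | 1 ≤ T ∧
        distZ (fun j => (T : ℝ) * ω j) < distZ (fun j => (Tp : ℝ) * ω j)}.Nonempty := ⟨T, hmem⟩
    have hp : periods ω (i+1) = sInf {T : ℕ | 1 ≤ T ∧
        distZ (fun j => (T : ℝ) * ω j) < distZ (fun j => (Tp : ℝ) * ω j)} := by
      rw [periods]
    constructor
    · rw [hp]; exact (Nat.sInf_mem hset).1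
    · have h1 : periods ω (i+1) ≤ T := by rw [hp]; exact Nat.sInf_le hmem
      have h2 : (periods ω (i+1):ℝ) ≤ ((Q:ℝ)) ^ n := by
        exact_mod_cast le_trans h1 hTQ
      have hQle : (Q:ℝ) ≤ 2/ε := by
        have hfl : (Q:ℝ) ≤ ε⁻¹ + 1 := by
          rw [hQdef]; push_cast
          have := Nat.floor_le (show (0:ℝ) ≤ ε⁻¹ by positivity)
          linarith
        have h1' : (1:ℝ) ≤ ε⁻¹ := by
          nlinarith [mul_inv_cancel₀ (ne_of_gt hε0)]
        calc (Q:ℝ) ≤ ε⁻¹ + 1 := hfl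
          _ ≤ ε⁻¹ + ε⁻¹ := by linarith
          _ = 2/ε := by rw [div_eq_mul_inv]; ring
      have h3 : ((Q:ℝ)) ^ n ≤ (2/ε) ^ n :=
        pow_le_pow_left₀ hQ0.le hQle n
      have hlb0 : 0 < C * (Tp:ℝ) ^ (-E) := by positivity
      have h4 : (2/ε) ^ n ≤ (2/(C * (Tp:ℝ) ^ (-E))) ^ n := by
        apply pow_le_pow_left₀ (by positivity)
        exact div_le_div_of_nonneg_left (by norm_num) hlb0 hεlb
      have h5 : (2/(C * (Tp:ℝ) ^ (-E))) ^ n = (2/C) ^ n * (Tp:ℝ) ^ (1 + τ / D) := by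
        have hx : 2/(C * (Tp:ℝ) ^ (-E)) = (2/C) * (Tp:ℝ) ^ E := by
          rw [Real.rpow_neg hTp0.le]
          field_simp
        rw [hx, mul_pow, ← Real.rpow_natCast ((Tp:ℝ) ^ E) n, ← Real.rpow_mul hTp0.le, hEn]
      calc (periods ω (i+1):ℝ) ≤ ((Q:ℝ)) ^ n := h2
        _ ≤ (2/ε) ^ n := h3
        _ ≤ (2/(C * (Tp:ℝ) ^ (-E))) ^ n := h4
        _ = (2/C) ^ n * (Tp:ℝ) ^ (1 + τ / D) := h5
  have hall : ∀ i, 1 ≤ periods ω i := by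
    intro i
    induction i with
    | zero => simp [periods]
    | succ i ih => exact (hboth i ih).1
  exact ⟨hres, hirr, (2/C) ^ n, by positivity, fun i => (hboth i (hall i)).2⟩
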